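/- Let E be a finite type and let S₁, …, S_b be finite subsets of E (b ≥ 1) such that for every index k there exists an element e ∈ S_k with e ∉ S_j for all j ≠ k. Then the linear subspace W = { ℓ : E → ℝ | for every k with 1 ≤ k ≤ b − 1, ∑_{e ∈ S_k} ℓ(e) = ∑_{e ∈ S_{k+1}} ℓ(e) } of the real vector space E → ℝ has dimension |E| − (b − 1); that is, W has codimension b − 1. -/
import Mathlib

open Finset

/-- If `S₁, …, S_b` (with `b ≥ 1`) are finite subsets of a finite type `E` such that
each `S_k` contains an element belonging to no other `S_j`, then the subspace
`W = { ℓ : E → ℝ | ∑_{e ∈ S_k} ℓ e = ∑_{e ∈ S_{k+1}} ℓ e for 1 ≤ k ≤ b−1 }`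
has dimension `|E| − (b − 1)`, i.e. codimension `b − 1`. -/
theorem codim_length_equations
    {E : Type*} [Fintype E] [DecidableEq E]
    (b : ℕ) (hb : 1 ≤ b) (S : Fin b → Finset E)
    (h : ∀ k, ∃ e ∈ S k, ∀ j, j ≠ k → e ∉ S j)
    (W : Submodule ℝ (E → ℝ))
    (hW : ∀ ℓ : E → ℝ, ℓ ∈ W ↔
      ∀ (k : ℕ) (hk : k + 1 < b),
        ∑ e ∈ S ⟨k, Nat.lt_of_succ_lt hk⟩, ℓ e = ∑ e ∈ S ⟨k + 1, hk⟩, ℓ e) :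
    Module.finrank ℝ W = Fintype.card E - (b - 1) := by
  classical
  choose eE heE huniq using h
  set d := b - 1 with hd
  have hb1 : ∀ k : Fin d, (k : ℕ) < b := fun k => by have := k.isLt; omega
  have hb2 : ∀ k : Fin d, (k : ℕ) + 1 < b := fun k => by have := k.isLt; omega
  let φ : (E → ℝ) →ₗ[ℝ] (Fin d → ℝ) :=
    { toFun := fun ℓ k => (∑ e ∈ S ⟨k, hb1 k⟩, ℓ e) - ∑ e ∈ S ⟨(k : ℕ) + 1, hb2 k⟩, ℓ e
      map_add' := by
        intro x y; funext k
        simp [Finset.sum_add_distrib]; ring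
      map_smul' := by
        intro c x; funext k
        simp only [Pi.smul_apply, smul_eq_mul, RingHom.id_apply]
        rw [mul_sub, Finset.mul_sum, Finset.mul_sum] }
  have hφ : ∀ (ℓ : E → ℝ) (k : Fin d),
      φ ℓ k = (∑ e ∈ S ⟨k, hb1 k⟩, ℓ e) - ∑ e ∈ S ⟨(k : ℕ) + 1, hb2 k⟩, ℓ e := fun _ _ => rfl
  have hker : W = LinearMap.ker φ := by
    ext ℓ
    rw [hW ℓ, LinearMap.mem_ker]
    constructor
    · intro hℓ
      funext k
      rw [hφ]
      have := hℓ k (hb2 k)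
      simp [this]
    · intro hℓ k hk
      have hkd : k < d := by omega
      have := congrFun hℓ ⟨k, hkd⟩
      rw [hφ] at this
      simpa [sub_eq_zero] using this
  -- the key summation computation
  have hsum : ∀ (c : Fin b → ℝ) (m : Fin b),
      ∑ e ∈ S m, (∑ j : Fin b, c j * (if e = eE j then (1:ℝ) else 0)) = c m := by
    intro c m
    rw [Finset.sum_comm]
    have : ∀ j : Fin b, (∑ e ∈ S m, c j * (if e = eE j then (1:ℝ) else 0))
        = if j = m then c j else 0 := by
      intro j
      rw [← Finset.mul_sum, Finset.sum_ite_eq' (S m) (eE j)]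
      by_cases hjm : j = m
      · subst hjm; simp [heE j]
      · have : eE j ∉ S m := huniq j m (Ne.symm hjm)
        simp [this, hjm]
    simp only [this]
    simp
  have hsurj : Function.Surjective φ := by
    intro t
    refine ⟨fun e => ∑ j : Fin b,
      (∑ i : Fin d, if (j : ℕ) ≤ (i : ℕ) then t i else 0) * (if e = eE j then (1:ℝ) else 0), ?_⟩
    funext k
    rw [hφ, hsum (fun j => ∑ i : Fin d, if (j : ℕ) ≤ (i : ℕ) then t i else 0),
      hsum (fun j => ∑ i : Fin d, if (j : ℕ) ≤ (i : ℕ) then t i else 0)]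
    show (∑ i : Fin d, if (k : ℕ) ≤ (i : ℕ) then t i else 0)
        - (∑ i : Fin d, if (k : ℕ) + 1 ≤ (i : ℕ) then t i else 0) = t k
    rw [← Finset.sum_sub_distrib]
    have hpt : ∀ i : Fin d,
        ((if (k : ℕ) ≤ (i : ℕ) then t i else 0) - (if (k : ℕ) + 1 ≤ (i : ℕ) then t i else 0))
        = if i = k then t i else 0 := by
      intro i
      rcases Nat.lt_trichotomy (i : ℕ) (k : ℕ) with hlt | heq | hgt
      · have h1 : ¬ (k : ℕ) ≤ (i : ℕ) := by omega
        have h2 : ¬ (k : ℕ) + 1 ≤ (i : ℕ) := by omega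
        have h3 : i ≠ k := by simp only [ne_eq, Fin.ext_iff]; omega
        simp [h1, h2, h3]
      · have h3 : i = k := Fin.ext heq
        subst h3
        simp [show ¬ (i : ℕ) + 1 ≤ (i : ℕ) by omega]
      · have h1 : (k : ℕ) ≤ (i : ℕ) := by omega
        have h2 : (k : ℕ) + 1 ≤ (i : ℕ) := by omega
        have h3 : i ≠ k := by simp only [ne_eq, Fin.ext_iff]; omega
        simp [h1, h2, h3]
    simp only [hpt]
    simp
  have hrn := LinearMap.finrank_range_add_finrank_ker φ
  rw [LinearMap.range_eq_top.mpr hsurj] at hrn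
  have hdim : Module.finrank ℝ (⊤ : Submodule ℝ (Fin d → ℝ)) = d := by
    simp [finrank_top]
  rw [hdim] at hrn
  have hE : Module.finrank ℝ (E → ℝ) = Fintype.card E := by
    simp [Module.finrank_pi]
  rw [hE] at hrn
  rw [hker]
  omega
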